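/- Let T be a finite-dimensional real vector space and let Φ : T → T → T → T → ℝ be multilinear, symmetric in the first pair, symmetric in the last pair, and symmetric under swapping the two pairs. Define E(X,Y,Z,W) = (1/3)(Φ(X,Y,Z,W) + Φ(Y,Z,X,W) + Φ(Z,X,Y,W)) and R(X,Y,Z,W) = Φ(X,Z,Y,W) − Φ(X,W,Y,Z). Then Φ(X,Y,Z,W) = E(X,Y,Z,W) + (1/3)(R(X,Z,Y,W) + R(X,W,Y,Z)) for all X,Y,Z,W, and E is fully symmetric in all four arguments. -/
import Mathlib

theorem phi_decomposition_and_E_symmetric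
    {T : Type*} [AddCommGroup T] [Module ℝ T] [FiniteDimensional ℝ T]
    (Φ : T →ₗ[ℝ] T →ₗ[ℝ] T →ₗ[ℝ] T →ₗ[ℝ] ℝ)
    (h1 : ∀ X Y Z W : T, Φ X Y Z W = Φ Y X Z W)
    (h2 : ∀ X Y Z W : T, Φ X Y Z W = Φ X Y W Z)
    (h3 : ∀ X Y Z W : T, Φ X Y Z W = Φ Z W X Y)
    (E R : T → T → T → T → ℝ)
    (hE : ∀ X Y Z W : T,
      E X Y Z W = (1/3) * (Φ X Y Z W + Φ Y Z X W + Φ Z X Y W))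
    (hR : ∀ X Y Z W : T, R X Y Z W = Φ X Z Y W - Φ X W Y Z) :
    (∀ X Y Z W : T,
      Φ X Y Z W = E X Y Z W + (1/3) * (R X Z Y W + R X W Y Z)) ∧
    (∀ X Y Z W : T,
      E X Y Z W = E Y X Z W ∧ E X Y Z W = E X Z Y W ∧ E X Y Z W = E X Y W Z) := by
  constructor
  · intro X Y Z W
    rw [hE, hR, hR]
    have a : Φ Y Z X W = Φ X W Z Y := by rw [h3 Y Z X W, h2 X W Y Z]
    have b : Φ Z X Y W = Φ X Z W Y := by rw [h1 Z X Y W, h2 X Z Y W]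
    have c : Φ X Y W Z = Φ X Y Z W := (h2 X Y Z W).symm
    rw [a, b, c]
    ring
  · intro X Y Z W
    refine ⟨?_, ?_, ?_⟩
    · rw [hE, hE, h1 Y X Z W, h1 X Z Y W, h1 Z Y X W]
      ring
    · rw [hE, hE, h1 X Z Y W, h1 Z Y X W, h1 Y X Z W]
      ring
    · rw [hE, hE, ← h2 X Y Z W]
      have a : Φ Y W X Z = Φ Z X Y W := by rw [h2 Y W X Z, h3 Y W Z X]
      have b : Φ W X Y Z = Φ Y Z X W := by rw [h1 W X Y Z, h3 X W Y Z]
      rw [a, b]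
      ring
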